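/- Let A, B, C be real numbers with AC ≥ 0, and define Y(A,B,C) = max over z in the closed unit disk of (|A + Bz + Cz²| + 1 − |z|²). Then Y(A,B,C) = |A| + |B| + |C| if |B| ≥ 2(1 − |C|), and Y(A,B,C) = 1 + |A| + B²/(4(1 − |C|)) if |B| < 2(1 − |C|). -/
import Mathlib

private lemma aligned_nonneg (a b c r : ℝ) (ha : 0 ≤ a) (hb : 0 ≤ b) (hc : 0 ≤ c)
    (hr : 0 ≤ r) : |a + b*r + c*r^2| = |a| + |b| *r + |c| *r^2 := by
  rw [abs_of_nonneg ha, abs_of_nonneg hb, abs_of_nonneg hc, abs_of_nonneg]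
  exact add_nonneg (add_nonneg ha (mul_nonneg hb hr)) (mul_nonneg hc (sq_nonneg r))

private lemma aligned (a b c r : ℝ) (hr : 0 ≤ r) (hac : 0 ≤ a*c) (hb : 0 ≤ (a+c)*b) :
    |a + b*r + c*r^2| = |a| + |b| *r + |c| *r^2 := by
  rcases le_total 0 (a+c) with h | h
  · have ha : 0 ≤ a := by nlinarith
    have hc : 0 ≤ c := by nlinarith
    rcases eq_or_lt_of_le h with h0 | h0
    · have ha0 : a = 0 := by linarith
      have hc0 : c = 0 := by linarith
      simp [ha0, hc0, abs_mul, abs_of_nonneg hr]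
    · have hbp : 0 ≤ b := by nlinarith
      exact aligned_nonneg a b c r ha hbp hc hr
  · have ha : a ≤ 0 := by nlinarith
    have hc : c ≤ 0 := by nlinarith
    rcases eq_or_lt_of_le h with h0 | h0
    · have ha0 : a = 0 := by linarith
      have hc0 : c = 0 := by linarith
      simp [ha0, hc0, abs_mul, abs_of_nonneg hr]
    · have hbp : b ≤ 0 := by nlinarith
      have := aligned_nonneg (-a) (-b) (-c) r (by linarith) (by linarith) (by linarith) hr
      have e : |(-a) + (-b)*r + (-c)*r^2| = |a + b*r + c*r^2| := by
        rw [show (-a) + (-b)*r + (-c)*r^2 = -(a + b*r + c*r^2) by ring, abs_neg]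
      rw [e, abs_neg, abs_neg, abs_neg] at this
      exact this

private lemma mem_helper (A B C x : ℝ) (hx : |x| ≤ 1) :
    |A + B*x + C*x^2| + 1 - x^2 ∈ {y : ℝ | ∃ z : ℂ, ‖z‖ ≤ 1 ∧
      y = ‖(A : ℂ) + (B : ℂ) * z + (C : ℂ) * z ^ 2‖ + 1 - ‖z‖^2} := by
  refine ⟨(x:ℂ), by simpa using hx, ?_⟩
  have h1 : (A:ℂ) + (B:ℂ)*(x:ℂ) + (C:ℂ)*(x:ℂ)^2 = ((A + B*x + C*x^2 : ℝ):ℂ) := by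
    push_cast; ring
  rw [h1, Complex.norm_real, Complex.norm_real, Real.norm_eq_abs, Real.norm_eq_abs, sq_abs]

theorem stmt_13 (A B C : ℝ) (hAC : 0 ≤ A * C) :
    (|B| ≥ 2 * (1 - |C|) →
      IsGreatest {y : ℝ | ∃ z : ℂ, ‖z‖ ≤ 1 ∧
        y = ‖(A : ℂ) + (B : ℂ) * z + (C : ℂ) * z ^ 2‖ + 1 - ‖z‖^2}
        (|A| + |B| + |C|)) ∧
    (|B| < 2 * (1 - |C|) →
      IsGreatest {y : ℝ | ∃ z : ℂ, ‖z‖ ≤ 1 ∧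
        y = ‖(A : ℂ) + (B : ℂ) * z + (C : ℂ) * z ^ 2‖ + 1 - ‖z‖^2}
        (1 + |A| + B^2 / (4 * (1 - |C|)))) := by
  -- choose a sign ε so that ε*B is aligned with A and C
  set ε : ℝ := if 0 ≤ (A+C)*B then 1 else -1 with hε
  have hεabs : |ε| = 1 := by
    rw [hε]; split <;> simp
  have hεB : 0 ≤ (A+C)*(ε*B) := by
    rw [hε]; split
    · simpa using ‹0 ≤ (A+C)*B›
    · push_neg at *; nlinarith [‹(A+C)*B < 0›]
  have hεBabs : |ε*B| = |B| := by rw [abs_mul, hεabs, one_mul]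
  -- upper bound for any point of the set
  have hub : ∀ z : ℂ, ‖z‖ ≤ 1 →
      ‖(A : ℂ) + (B : ℂ) * z + (C : ℂ) * z ^ 2‖ ≤ |A| + |B| *‖z‖ + |C| *‖z‖^2 := by
    intro z hz
    have h1 := norm_add_le ((A:ℂ) + (B:ℂ)*z) ((C:ℂ)*z^2)
    have h2 := norm_add_le (A:ℂ) ((B:ℂ)*z)
    have e1 : ‖((C:ℂ)*z^2)‖ = |C| *‖z‖^2 := by simp [norm_mul, norm_pow]
    have e2 : ‖((B:ℂ)*z)‖ = |B| *‖z‖ := by simp [norm_mul]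
    have e3 : ‖((A:ℂ))‖ = |A| := by simp
    linarith
  constructor
  · intro hB
    constructor
    · -- attained at z = ε
      have hx : |ε| ≤ 1 := le_of_eq hεabs
      have := mem_helper A B C ε hx
      have key : |A + B*ε + C*ε^2| = |A| + |B| + |C| := by
        have hε2 : ε^2 = 1 := by rw [hε]; split <;> norm_num
        have := aligned A (ε*B) C 1 zero_le_one hAC (by simpa using hεB)
        rw [hεBabs] at this
        calc |A + B*ε + C*ε^2| = |A + (ε*B)*1 + C*1^2| := by rw [hε2]; ring_nf
          _ = |A| + |B| *1 + |C| *1^2 := this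
          _ = |A| + |B| + |C| := by ring
      have hε2 : ε^2 = 1 := by rw [hε]; split <;> norm_num
      rw [key, hε2] at this
      simpa using this
    · rintro y ⟨z, hz, rfl⟩
      have hb := hub z hz
      have hr0 : (0:ℝ) ≤ ‖z‖ := norm_nonneg z
      rcases le_or_gt |C| 1 with hC | hC
      · nlinarith [mul_nonneg (sub_nonneg.2 hB) (sub_nonneg.2 hz),
          mul_nonneg (sub_nonneg.2 hC) (sq_nonneg (1 - ‖z‖))]
      · nlinarith [mul_nonneg (abs_nonneg B) (sub_nonneg.2 hz),
          mul_nonneg (sub_nonneg.2 hC.le) (mul_nonneg (sub_nonneg.2 hz) (by linarith : (0:ℝ) ≤ 1 + ‖z‖))]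
  · intro hB
    have hd : 0 < 1 - |C| := by
      have := abs_nonneg B; linarith
    set r : ℝ := |B| / (2 * (1 - |C|)) with hrdef
    have hr0 : 0 ≤ r := div_nonneg (abs_nonneg B) (by linarith)
    have hr1 : r < 1 := by
      rw [hrdef, div_lt_one (by linarith)]; linarith
    constructor
    · -- attained at z = ε * r
      have hx : |ε*r| ≤ 1 := by
        rw [abs_mul, hεabs, one_mul, abs_of_nonneg hr0]; linarith
      have hmem := mem_helper A B C (ε*r) hx
      have key : |A + B*(ε*r) + C*(ε*r)^2| + 1 - (ε*r)^2
          = 1 + |A| + B^2 / (4 * (1 - |C|)) := by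
        have hε2 : ε^2 = 1 := by rw [hε]; split <;> norm_num
        have hal := aligned A (ε*B) C r hr0 hAC hεB
        rw [hεBabs] at hal
        have e : |A + B*(ε*r) + C*(ε*r)^2| = |A + (ε*B)*r + C*r^2| := by
          rw [mul_pow, hε2, one_mul]; ring_nf
        rw [e, hal, mul_pow, hε2, one_mul]
        have hB2 : |B|^2 = B^2 := sq_abs B
        rw [hrdef]
        field_simp
        nlinarith [hB2]
      rw [key] at hmem
      exact hmem
    · rintro y ⟨z, hz, rfl⟩
      have hb := hub z hz
      have hr0' : (0:ℝ) ≤ ‖z‖ := norm_nonneg z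
      have hkey : |B| *‖z‖ - (1 - |C|)*‖z‖^2 ≤ B^2 / (4 * (1 - |C|)) := by
        rw [le_div_iff₀ (by positivity)]
        nlinarith [sq_nonneg (|B| - 2*(1 - |C|)*‖z‖), sq_abs B]
      linarith
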